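/- From a perfect independent set to a perfect set of pairwise inequivalent elements: let E be an equivalence relation on Cantor space 2^ℕ, let x be a parameter such that E ∈ 𝔇(x), and let C ⊆ 2^ℕ be a set of elements pairwise independent over x such that no element of C has its E-class in 𝔇(x) (identifying each point z ∈ 2^ℕ with an element of Ω via its neighborhood filter). Then C consists of pairwise E-inequivalent elements. -/
import Mathlib


/-- from a perfect independent set to pairwise inequivalent elements.
If `E` is an equivalence relation on Cantor space, `E` is definable from `x`, and
`C` is a set of points pairwise independent over `x` (coding points as elements of
`Ω`) none of whose `E`-classes is `x`-definable, then `C` consists of pairwise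
`E`-inequivalent elements. -/
theorem perfect_set_inequivalent {Ω : Type*}
    (D : Ω → Set Ω) (𝔇 : Ω → Set (Set Ω)) (pair : Ω → Ω → Ω)
    (indep : Ω → Ω → Ω → Prop)
    -- coding of points of Cantor space as elements of Ω (via neighborhood filters)
    (code : (ℕ → Bool) → Ω)
    (hcode : Function.Injective code)
    (E : (ℕ → Bool) → (ℕ → Bool) → Prop)
    (hE : Equivalence E)
    (x : Ω)
    -- symmetry, heredity, transitivity, strengthened duplication, product:
    (hsymm : ∀ x' y₀ y₁, indep x' y₀ y₁ → indep x' y₁ y₀)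
    (hhered : ∀ x' y₀ y₁ y₀', y₀' ∈ D (pair x' y₀) → indep x' y₀ y₁ →
      indep x' y₀' y₁)
    (htrans : ∀ x' y₀ y₁ z, indep x' y₀ y₁ → indep (pair x' y₀) z y₁ →
      indep x' (pair y₀ z) y₁)
    (hdup' : ∀ x' y₀, ∀ A ∈ 𝔇 x', A.Nonempty → ∃ y₁ ∈ A, indep x' y₀ y₁)
    (hprod : ∀ x' y₀ y₁, ∀ A ∈ 𝔇 x', indep x' y₀ y₁ → pair y₀ y₁ ∈ A →
      ∃ B₀ ∈ 𝔇 x', ∃ B₁ ∈ 𝔇 x', y₀ ∈ B₀ ∧ y₁ ∈ B₁ ∧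
        ∀ y₀' ∈ B₀, ∀ y₁' ∈ B₁, indep x' y₀' y₁' → pair y₀' y₁' ∈ A)
    -- the intersection consequence: a set definable both from (x,y₀) and from
    -- (x,y₁) with y₀ ⫫[x] y₁ is definable from x
    (hinter : ∀ y₀ y₁, indep x y₀ y₁ →
      ∀ A : Set Ω, A ∈ 𝔇 (pair x y₀) → A ∈ 𝔇 (pair x y₁) → A ∈ 𝔇 x)
    -- each E-class is definable from x together with any of its members
    (hclass : ∀ z : ℕ → Bool, code '' {w | E z w} ∈ 𝔇 (pair x (code z)))
    (C : Set (ℕ → Bool))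
    -- C consists of elements pairwise independent over x
    (hCindep : ∀ z₀ ∈ C, ∀ z₁ ∈ C, z₀ ≠ z₁ → indep x (code z₀) (code z₁))
    -- no element of C has its E-class definable from x
    (hCclass : ∀ z ∈ C, code '' {w | E z w} ∉ 𝔇 x) :
    ∀ z₀ ∈ C, ∀ z₁ ∈ C, z₀ ≠ z₁ → ¬ E z₀ z₁ := by
  intro z₀ hz₀ z₁ hz₁ hne hEz
  have hset : {w | E z₀ w} = {w | E z₁ w} := by
    ext w
    exact ⟨fun h => hE.trans (hE.symm hEz) h, fun h => hE.trans hEz h⟩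
  apply hCclass z₀ hz₀
  apply hinter (code z₀) (code z₁) (hCindep z₀ hz₀ z₁ hz₁ hne)
  · exact hclass z₀
  · rw [hset]; exact hclass z₁
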